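/- Let I be a BinCSP instance with Gaifman graph G, let W ⊆ V(G), and let T be an elimination forest of G − W such that every edge of T is an edge of G. For v ∈ V(G)∖W, let A(v) be the set of ancestors of v in T including v, B(v) the set of children of v in T, and desc(v) the set of strict descendants of v in T. Call f : A(v) → ⋃_u D(u) conflict-free if f(x) ∈ D(x) for all x ∈ A(v) and (f(x), f(y)) ∈ C(x,y) for every edge xy of G with x, y ∈ A(v). Fix α with α(w) ∈ D(w) for every w ∈ W, and define, by recursion from the leaves of T upwards, for each v ∈ V(G)∖W and each conflict-free f : A(v) → ⋃_u D(u), the Boolean value F⁶(α, v, f) to be true iff (a) for every x ∈ A(v) and w ∈ W with xw ∈ E(G), (f(x), α(w)) ∈ C(x, w), and (b) for every y ∈ B(v) there exists c ∈ D(y) such that f extended by y ↦ c is conflict-free on A(y) = A(v) ∪ {y} and F⁶(α, y, f ⊕ (y ↦ c)) is true. Then F⁶(α, v, f) is true if and only if there exists η : A(v) ∪ desc(v) ∪ W → ⋃_u D(u) extending f with η(w) = α(w) for all w ∈ W, η(u) ∈ D(u) for all u, and (η(x), η(y)) ∈ C(x, y) for every edge xy of G whose endpoints both lie in A(v) ∪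 desc(v) ∪ W and at least one of which lies in A(v) ∪ desc(v). -/
import Mathlib


/-- A rooted forest on a vertex type `V`, given by a parent function.
Well-foundedness guarantees that following parents from any vertex
eventually reaches a root (a vertex with no parent). -/
structure RootedForest (V : Type) where
  parent : V → Option V
  wf : WellFounded (fun a b => parent b = some a)

namespace RootedForest

/-- `F.anc u v` means that `u` is an ancestor of `v` in `F` (possibly `u = v`). -/
def anc {V : Type} (F : RootedForest V) (u v : V) : Prop :=
  Relation.ReflTransGen (fun a b => F.parent a = some b) v u

end RootedForest

/-- `f` is conflict-free at `v`: on the set `A(v)` of ancestors of `v` (including `v`),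
`f` respects the domains and all constraints of the instance. -/
def ConflictFree {V A : Type} {W : Set V} (G : SimpleGraph V) (D : V → Set A)
    (C : V → V → Set (A × A)) (T : RootedForest {v : V // v ∉ W})
    (v : {v : V // v ∉ W}) (f : {v : V // v ∉ W} → A) : Prop :=
  (∀ x : {v : V // v ∉ W}, T.anc x v → f x ∈ D ↑x) ∧
  (∀ x y : {v : V // v ∉ W}, T.anc x v → T.anc y v → G.Adj ↑x ↑y → (f x, f y) ∈ C ↑x ↑y)


section AuxLemmas

theorem rtg_comparable {V : Type} {r : V → V → Prop}
    (hdet : ∀ a b c, r a b → r a c → b = c) {a b c : V}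
    (h1 : Relation.ReflTransGen r a b) (h2 : Relation.ReflTransGen r a c) :
    Relation.ReflTransGen r b c ∨ Relation.ReflTransGen r c b := by
  induction h1 with
  | refl => exact Or.inl h2
  | tail h1' hstep ih =>
    rcases ih with h | h
    · rcases h.cases_head with rfl | ⟨d, hd, h'⟩
      · exact Or.inr (Relation.ReflTransGen.single hstep)
      · obtain rfl := hdet _ _ _ hd hstep
        exact Or.inl h'
    · exact Or.inr (h.tail hstep)

namespace RootedForest

variable {V : Type} {T : RootedForest V}

theorem anc_refl (T : RootedForest V) (v : V) : T.anc v v := Relation.ReflTransGen.refl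

theorem anc_trans {x y z : V} (h1 : T.anc x y) (h2 : T.anc y z) : T.anc x z :=
  Relation.ReflTransGen.trans h2 h1

theorem anc_parent {y v : V} (h : T.parent y = some v) : T.anc v y :=
  Relation.ReflTransGen.single h

theorem parent_det {a b c : V} (h1 : T.parent a = some b) (h2 : T.parent a = some c) :
    b = c := by rw [h1] at h2; exact Option.some.inj h2

theorem noloop (x : V) : ¬ Relation.TransGen (fun a b => T.parent a = some b) x x := by
  intro h
  have h2 : Relation.TransGen (Function.swap fun a b : V => T.parent b = some a) x x := h
  rw [Relation.transGen_swap] at h2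
  exact T.wf.transGen.asymmetric _ _ h2 h2

theorem child_not_anc {y v : V} (hp : T.parent y = some v) (h : T.anc y v) : False :=
  noloop v (Relation.TransGen.tail' h hp)

theorem anc_child_cases {x y v : V} (hp : T.parent y = some v) (h : T.anc x y) :
    x = y ∨ T.anc x v := by
  rcases Relation.ReflTransGen.cases_head h with h' | ⟨d, hd, h'⟩
  · exact Or.inl h'.symm
  · obtain rfl := parent_det hd hp
    exact Or.inr h'

theorem strict_desc_child {x v : V} (h : T.anc v x) (hne : x ≠ v) :
    ∃ y, T.parent y = some v ∧ T.anc y x := by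
  rcases Relation.ReflTransGen.cases_tail h with h' | ⟨y, h1, h2⟩
  · exact absurd h'.symm hne
  · exact ⟨y, h2, h1⟩

theorem anc_comparable {x y z : V} (h1 : T.anc x z) (h2 : T.anc y z) :
    T.anc x y ∨ T.anc y x := by
  have h := rtg_comparable (r := fun a b : V => T.parent a = some b)
    (fun _ _ _ h h' => parent_det h h') h1 h2
  exact h.symm

theorem child_unique {y y' x v : V} (hy : T.parent y = some v) (hy' : T.parent y' = some v)
    (h1 : T.anc y x) (h2 : T.anc y' x) : y = y' := by
  rcases anc_comparable h1 h2 with h | h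
  · rcases anc_child_cases hy' h with h' | h'
    · exact h'
    · exact (child_not_anc hy h').elim
  · rcases anc_child_cases hy h with h' | h'
    · exact h'.symm
    · exact (child_not_anc hy' h').elim

end RootedForest

end AuxLemmas

/-- correctness of the recursively defined values `F⁶(α, v, f)`.
`Φ : (v, f) ↦ Prop` is any predicate satisfying the defining recurrence of `F⁶` (clause
(a): no conflict of the ancestors with the assignment `α` of the modulator `W`; clause
(b): every child subtree admits a conflict-free extension with `Φ` true). Then for every
conflict-free `f`, `Φ v f` holds iff the assignment given by `f` on `A(v)` and `α` on `W`
extends to `v`, its ancestors, its descendants and `W`, respecting domains and all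
constraints with at least one endpoint in `A(v) ∪ desc(v)`. -/
theorem stmt9 {V A : Type} [Fintype V] [DecidableEq V] (G : SimpleGraph V)
    (D : V → Set A) (C : V → V → Set (A × A))
    (hsym : ∀ u v : V, ∀ a b : A, (a, b) ∈ C u v ↔ (b, a) ∈ C v u)
    (hdom : ∀ u v : V, ∀ a b : A, (a, b) ∈ C u v → a ∈ D u ∧ b ∈ D v)
    (W : Set V) (T : RootedForest {v : V // v ∉ W})
    -- `T` is an elimination forest of `G − W` all of whose edges are edges of `G`
    (hElim : ∀ u v : {v : V // v ∉ W}, G.Adj ↑u ↑v → T.anc u v ∨ T.anc v u)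
    (hTE : ∀ u v : {v : V // v ∉ W}, T.parent u = some v → G.Adj ↑u ↑v)
    -- a fixed assignment of the modulator
    (α : V → A) (hα : ∀ w ∈ W, α w ∈ D w)
    -- `Φ` satisfies the defining recurrence of `F⁶`
    (Φ : {v : V // v ∉ W} → ({v : V // v ∉ W} → A) → Prop)
    (hΦ : ∀ (v : {v : V // v ∉ W}) (f : {v : V // v ∉ W} → A),
      ConflictFree G D C T v f →
      (Φ v f ↔
        ((∀ x : {v : V // v ∉ W}, T.anc x v →
            ∀ w ∈ W, G.Adj ↑x w → (f x, α w) ∈ C ↑x w) ∧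
         (∀ y : {v : V // v ∉ W}, T.parent y = some v →
            ∃ c ∈ D ↑y, ConflictFree G D C T y (Function.update f y c) ∧
              Φ y (Function.update f y c)))))
    (v : {v : V // v ∉ W}) (f : {v : V // v ∉ W} → A)
    (hf : ConflictFree G D C T v f) :
    Φ v f ↔
      ∃ η : V → A,
        -- `η` extends `f` on `A(v)` and agrees with `α` on `W`
        (∀ x : {v : V // v ∉ W}, T.anc x v → η ↑x = f x) ∧
        (∀ w ∈ W, η w = α w) ∧
        -- `η` respects the domains on `A(v) ∪ desc(v) ∪ W`
        (∀ x : {v : V // v ∉ W}, (T.anc x v ∨ T.anc v x) → η ↑x ∈ D ↑x) ∧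
        (∀ w ∈ W, η w ∈ D w) ∧
        -- `η` respects the constraints on edges inside `A(v) ∪ desc(v)`
        (∀ x y : {v : V // v ∉ W}, (T.anc x v ∨ T.anc v x) → (T.anc y v ∨ T.anc v y) →
          G.Adj ↑x ↑y → (η ↑x, η ↑y) ∈ C ↑x ↑y) ∧
        -- `η` respects the constraints on edges between `A(v) ∪ desc(v)` and `W`
        (∀ x : {v : V // v ∉ W}, (T.anc x v ∨ T.anc v x) →
          ∀ w ∈ W, G.Adj ↑x w → (η ↑x, η w) ∈ C ↑x w) := by
  classical
  have hwf : WellFounded (fun y x : {v : V // v ∉ W} => T.parent y = some x) := by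
    haveI : IsTrans {v : V // v ∉ W}
        (Relation.TransGen (fun y x : {v : V // v ∉ W} => T.parent y = some x)) :=
      ⟨fun _ _ _ => Relation.TransGen.trans⟩
    haveI : IsIrrefl {v : V // v ∉ W}
        (Relation.TransGen (fun y x : {v : V // v ∉ W} => T.parent y = some x)) :=
      ⟨fun x h => T.noloop x h⟩
    exact Subrelation.wf
      (r := Relation.TransGen (fun y x : {v : V // v ∉ W} => T.parent y = some x))
      (fun h => Relation.TransGen.single h) (Finite.wellFounded_of_trans_of_irrefl _)
  suffices H : ∀ v : {v : V // v ∉ W}, ∀ f, ConflictFree G D C T v f →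
      (Φ v f ↔
        ∃ η : V → A,
          (∀ x : {v : V // v ∉ W}, T.anc x v → η ↑x = f x) ∧
          (∀ w ∈ W, η w = α w) ∧
          (∀ x : {v : V // v ∉ W}, (T.anc x v ∨ T.anc v x) → η ↑x ∈ D ↑x) ∧
          (∀ w ∈ W, η w ∈ D w) ∧
          (∀ x y : {v : V // v ∉ W}, (T.anc x v ∨ T.anc v x) → (T.anc y v ∨ T.anc v y) →
            G.Adj ↑x ↑y → (η ↑x, η ↑y) ∈ C ↑x ↑y) ∧
          (∀ x : {v : V // v ∉ W}, (T.anc x v ∨ T.anc v x) →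
            ∀ w ∈ W, G.Adj ↑x w → (η ↑x, η w) ∈ C ↑x w)) by
    exact H v f hf
  intro v
  have hacc := hwf.apply v
  clear hf f
  induction hacc with
  | intro v _ IH =>
  intro f hcf
  constructor
  · -- forward direction
    intro hΦv
    obtain ⟨ha, hb⟩ := (hΦ v f hcf).mp hΦv
    have key : ∀ (y : {v : V // v ∉ W}), T.parent y = some v →
        ∃ ηy : V → A,
          (∀ x : {v : V // v ∉ W}, T.anc x v → ηy ↑x = f x) ∧
          (∀ w ∈ W, ηy w = α w) ∧
          (∀ x : {v : V // v ∉ W}, (T.anc x y ∨ T.anc y x) → ηy ↑x ∈ D ↑x) ∧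
          (∀ x z : {v : V // v ∉ W}, (T.anc x y ∨ T.anc y x) → (T.anc z y ∨ T.anc y z) →
            G.Adj ↑x ↑z → (ηy ↑x, ηy ↑z) ∈ C ↑x ↑z) ∧
          (∀ x : {v : V // v ∉ W}, (T.anc x y ∨ T.anc y x) →
            ∀ w ∈ W, G.Adj ↑x w → (ηy ↑x, ηy w) ∈ C ↑x w) := by
      intro y hy
      obtain ⟨c, hcD, hcfY, hΦY⟩ := hb y hy
      obtain ⟨ηy, k1, k2, k3, _, k5, k6⟩ := (IH y hy (Function.update f y c) hcfY).mp hΦY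
      refine ⟨ηy, ?_, k2, k3, k5, k6⟩
      intro x hx
      have hxy : T.anc x y := T.anc_trans hx (RootedForest.anc_parent hy)
      have hne : x ≠ y := fun h => T.child_not_anc hy (h ▸ hx)
      rw [k1 x hxy, Function.update_of_ne hne]
    choose η hη1 hη2 hη3 hη4 hη5 using key
    set ηg : V → A := fun u =>
      if hu : u ∈ W then α u
      else if hx : ∃ y : {v : V // v ∉ W}, ∃ _hy : T.parent y = some v, T.anc y ⟨u, hu⟩ then
        η hx.choose hx.choose_spec.choose u
      else f ⟨u, hu⟩ with hηg
    have hcong : ∀ (y1 y2 : {v : V // v ∉ W}) (h1 : T.parent y1 = some v)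
        (h2 : T.parent y2 = some v), y1 = y2 → ∀ u, η y1 h1 u = η y2 h2 u := by
      rintro y1 y2 h1 h2 rfl u; rfl
    have eW : ∀ w ∈ W, ηg w = α w := by
      intro w hw
      simp only [hηg]
      rw [dif_pos hw]
    have e1 : ∀ x : {v : V // v ∉ W}, T.anc x v → ηg ↑x = f x := by
      intro x hx
      have hnex : ¬ ∃ y : {v : V // v ∉ W}, ∃ _hy : T.parent y = some v, T.anc y x := by
        rintro ⟨y, hy, hanc⟩
        exact T.child_not_anc hy (T.anc_trans hanc hx)
      simp only [hηg]
      rw [dif_neg x.2]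
      simp only [Subtype.coe_eta]
      rw [dif_neg hnex]
    have e2 : ∀ (y : {v : V // v ∉ W}) (hy : T.parent y = some v)
        (x : {v : V // v ∉ W}), T.anc y x → ηg ↑x = η y hy ↑x := by
      intro y hy x hanc
      have hex : ∃ y' : {v : V // v ∉ W}, ∃ _hy' : T.parent y' = some v, T.anc y' x :=
        ⟨y, hy, hanc⟩
      simp only [hηg]
      rw [dif_neg x.2]
      simp only [Subtype.coe_eta]
      rw [dif_pos hex]
      exact hcong _ _ _ _
        (T.child_unique hex.choose_spec.choose hy hex.choose_spec.choose_spec hanc) ↑x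
    have main5 : ∀ x z : {v : V // v ∉ W}, T.anc x z →
        (T.anc x v ∨ T.anc v x) → (T.anc z v ∨ T.anc v z) →
        G.Adj ↑x ↑z → (ηg ↑x, ηg ↑z) ∈ C ↑x ↑z := by
      intro x z hxz hxv hzv hadj
      by_cases hzA : T.anc z v
      · have hxA : T.anc x v := T.anc_trans hxz hzA
        rw [e1 x hxA, e1 z hzA]
        exact hcf.2 x z hxA hzA hadj
      · have hvz : T.anc v z := hzv.resolve_left hzA
        have hzne : z ≠ v := by rintro rfl; exact hzA (RootedForest.anc_refl T z)
        obtain ⟨y, hy, hyz⟩ := RootedForest.strict_desc_child hvz hzne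
        have hxy : T.anc x y ∨ T.anc y x := RootedForest.anc_comparable hxz hyz
        have ex : ηg ↑x = η y hy ↑x := by
          rcases hxy with h | h
          · rcases RootedForest.anc_child_cases hy h with h' | hxv'
            · exact e2 y hy x (by rw [h']; exact RootedForest.anc_refl T y)
            · rw [e1 x hxv', hη1 y hy x hxv']
          · exact e2 y hy x h
        rw [ex, e2 y hy z hyz]
        exact hη4 y hy x z hxy (Or.inr hyz) hadj
    refine ⟨ηg, e1, eW, ?_, ?_, ?_, ?_⟩
    · intro x hx
      rcases hx with hx | hx
      · rw [e1 x hx]; exact hcf.1 x hx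
      · by_cases hxv : x = v
        · subst hxv
          rw [e1 x (RootedForest.anc_refl T x)]
          exact hcf.1 x (RootedForest.anc_refl T x)
        · obtain ⟨y, hy, hyx⟩ := RootedForest.strict_desc_child hx hxv
          rw [e2 y hy x hyx]
          exact hη3 y hy x (Or.inr hyx)
    · intro w hw
      rw [eW w hw]
      exact hα w hw
    · intro x z hx hz hadj
      rcases hElim x z hadj with h | h
      · exact main5 x z h hx hz hadj
      · exact (hsym ↑z ↑x _ _).mp (main5 z x h hz hx hadj.symm)
    · intro x hx w hw hadj
      rcases hx with hx | hx
      · rw [e1 x hx, eW w hw]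
        exact ha x hx w hw hadj
      · by_cases hxv : x = v
        · subst hxv
          rw [e1 x (RootedForest.anc_refl T x), eW w hw]
          exact ha x (RootedForest.anc_refl T x) w hw hadj
        · obtain ⟨y, hy, hyx⟩ := RootedForest.strict_desc_child hx hxv
          have hc := hη5 y hy x (Or.inr hyx) w hw hadj
          rw [hη2 y hy w hw] at hc
          rw [e2 y hy x hyx, eW w hw]
          exact hc
  · -- backward direction
    rintro ⟨η, h1, h2, h3, h4, h5, h6⟩
    refine (hΦ v f hcf).mpr ⟨?_, ?_⟩
    · intro x hx w hw hadj
      rw [← h1 x hx, ← h2 w hw]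
      exact h6 x (Or.inl hx) w hw hadj
    · intro y hy
      have hvy : T.anc v y := RootedForest.anc_parent hy
      have hAy : ∀ x : {v : V // v ∉ W}, T.anc x y →
          Function.update f y (η ↑y) x = η ↑x := by
        intro x hx
        rcases RootedForest.anc_child_cases hy hx with rfl | hxv
        · simp
        · have hne : x ≠ y := fun h => T.child_not_anc hy (h ▸ hxv)
          rw [Function.update_of_ne hne, ← h1 x hxv]
      have hmem : ∀ x : {v : V // v ∉ W}, (T.anc x y ∨ T.anc y x) →
          (T.anc x v ∨ T.anc v x) := by
        intro x hx
        rcases hx with hx | hx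
        · rcases RootedForest.anc_child_cases hy hx with rfl | h'
          · exact Or.inr hvy
          · exact Or.inl h'
        · exact Or.inr (T.anc_trans hvy hx)
      have hcfY : ConflictFree G D C T y (Function.update f y (η ↑y)) := by
        constructor
        · intro x hx
          rw [hAy x hx]
          exact h3 x (hmem x (Or.inl hx))
        · intro x z hx hz hadj
          rw [hAy x hx, hAy z hz]
          exact h5 x z (hmem x (Or.inl hx)) (hmem z (Or.inl hz)) hadj
      refine ⟨η ↑y, h3 y (Or.inr hvy), hcfY, ?_⟩
      refine (IH y hy _ hcfY).mpr ⟨η, ?_, h2, ?_, h4, ?_, ?_⟩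
      · intro x hx
        exact (hAy x hx).symm
      · intro x hx
        exact h3 x (hmem x hx)
      · intro x z hx hz hadj
        exact h5 x z (hmem x hx) (hmem z hz) hadj
      · intro x hx w hw hadj
        exact h6 x (hmem x hx) w hw hadj
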